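/- Let (X_1,W_1),...,(X_n,W_n) be independent copies of a random vector (X,W) with joint probability density f_{X,W}, where X is a nonnegative continuous random variable. Let φ: [0,∞) → (0,1] be continuous decreasing with φ(0) = 1, and set W_i(t) = W_i·φ(t). Fix 1 ≤ r ≤ n. Then the survival function of the minimum of the concomitants at time t = 0, D(s) = P{min(W_{[r:n]}(0), W_{[r+1:n]}(0), ..., W_{[n:n]}(0)) > s}, satisfies D(s) = n·C(n-1,r-1) · ∫_0^∞ F_X(x)^{r-1} · [P{X > x, W > s}]^{n-r} · (∫_s^∞ f_{X,W}(x,y) dy) dx. -/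

import Mathlib

open MeasureTheory ProbabilityTheory

open Classical in
/-- The `r`-th order statistic (r = 1, ..., n) of the values `v 0, ..., v (n-1)`:
the smallest `x` such that at least `r` of the values are `≤ x`. -/
noncomputable def orderStat {n : ℕ} (v : Fin n → ℝ) (r : ℕ) : ℝ :=
  sInf {x : ℝ | r ≤ (Finset.univ.filter (fun i => v i ≤ x)).card}

/-- `min(W_{[r:n]}, ..., W_{[n:n]})`: the minimum of the concomitants of the order
statistics of ranks `r, ..., n`. -/
noncomputable def concomMin {n : ℕ} (v w : Fin n → ℝ) (r : ℕ) : ℝ :=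
  sInf {y : ℝ | ∃ i, orderStat v r ≤ v i ∧ w i = y}

open Classical

section Det
variable {n : ℕ} (v : Fin n → ℝ) {r : ℕ}

lemma os_set_nonempty (hr : 1 ≤ r) (hrn : r ≤ n) :
    {x : ℝ | r ≤ (Finset.univ.filter (fun i => v i ≤ x)).card}.Nonempty := by
  have hn : 0 < n := lt_of_lt_of_le hr hrn
  have hne : (Finset.univ.image v).Nonempty := by
    simp [Finset.image_nonempty, Finset.univ_nonempty_iff, ← Fin.pos_iff_nonempty, hn]
  refine ⟨(Finset.univ.image v).max' hne, ?_⟩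
  have : (Finset.univ.filter (fun i => v i ≤ (Finset.univ.image v).max' hne)) = Finset.univ := by
    refine Finset.eq_univ_of_forall (fun i => ?_)
    simp only [Finset.mem_filter, Finset.mem_univ, true_and]
    exact Finset.le_max' _ _ (Finset.mem_image_of_mem v (Finset.mem_univ i))
  simp [this, hrn]

lemma os_set_bddBelow (hr : 1 ≤ r) :
    BddBelow {x : ℝ | r ≤ (Finset.univ.filter (fun i => v i ≤ x)).card} := by
  by_cases hn : 0 < n
  · have hne : (Finset.univ.image v).Nonempty := by
      simp [Finset.image_nonempty, Finset.univ_nonempty_iff, ← Fin.pos_iff_nonempty, hn]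
    refine ⟨(Finset.univ.image v).min' hne, fun x hx => ?_⟩
    have hcard : 0 < (Finset.univ.filter (fun i => v i ≤ x)).card := lt_of_lt_of_le hr hx
    obtain ⟨i, hi⟩ := Finset.card_pos.1 hcard
    have hvi : v i ≤ x := (Finset.mem_filter.1 hi).2
    exact le_trans (Finset.min'_le _ _ (Finset.mem_image_of_mem v (Finset.mem_univ i))) hvi
  · refine ⟨0, fun x hx => ?_⟩
    exfalso
    simp only [Set.mem_setOf_eq] at hx
    have hn0 : n = 0 := by omega
    have : (Finset.univ.filter (fun i => v i ≤ x)).card ≤ n := by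
      simpa using Finset.card_le_card (Finset.filter_subset _ (Finset.univ : Finset (Fin n)))
    omega

lemma filter_le_mono {x y : ℝ} (hxy : x ≤ y) :
    (Finset.univ.filter (fun i => v i ≤ x)) ⊆ (Finset.univ.filter (fun i => v i ≤ y)) := by
  intro i hi
  simp only [Finset.mem_filter, Finset.mem_univ, true_and] at hi ⊢
  exact le_trans hi hxy

/-- key membership: the sInf belongs to the set. -/
lemma orderStat_mem (hr : 1 ≤ r) (hrn : r ≤ n) :
    r ≤ (Finset.univ.filter (fun i => v i ≤ orderStat v r)).card := by
  set T := {x : ℝ | r ≤ (Finset.univ.filter (fun i => v i ≤ x)).card} with hT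
  have hTne := os_set_nonempty v hr hrn
  have hTbdd := os_set_bddBelow v hr
  set a := orderStat v r with ha
  by_contra hcon
  -- consider values strictly above a
  set B := (Finset.univ.filter (fun i => a < v i)).image v with hB
  by_cases hBne : B.Nonempty
  · set b := B.min' hBne with hb
    have hab : a < b := by
      obtain ⟨i, hi, hvi⟩ := Finset.mem_image.1 (Finset.min'_mem B hBne)
      have h2 := (Finset.mem_filter.1 hi).2
      rw [hb, ← hvi]
      exact h2
    obtain ⟨t, htT, htb⟩ := exists_lt_of_csInf_lt hTne (show sInf T < b from hab)
    have hat : a ≤ t := csInf_le hTbdd htT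
    -- filter(≤ t) ⊆ filter(≤ a)
    have hsub : (Finset.univ.filter (fun i => v i ≤ t)) ⊆ (Finset.univ.filter (fun i => v i ≤ a)) := by
      intro i hi
      simp only [Finset.mem_filter, Finset.mem_univ, true_and] at hi ⊢
      by_contra hvia
      push_neg at hvia
      have hmemB : v i ∈ B := Finset.mem_image_of_mem v (by simp [hvia])
      have := Finset.min'_le B _ hmemB
      rw [← hb] at this
      linarith
    exact hcon (le_trans htT (Finset.card_le_card hsub))
  · -- no values above a: all v i ≤ a, card = n ≥ r
    have hall : ∀ i, v i ≤ a := by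
      intro i
      by_contra h
      push_neg at h
      exact hBne ⟨v i, Finset.mem_image_of_mem v (by simp [h])⟩
    have : (Finset.univ.filter (fun i => v i ≤ a)) = Finset.univ :=
      Finset.eq_univ_of_forall (fun i => by simp [hall i])
    rw [this] at hcon
    simp at hcon
    omega

lemma orderStat_le_iff (hr : 1 ≤ r) (hrn : r ≤ n) (x : ℝ) :
    orderStat v r ≤ x ↔ r ≤ (Finset.univ.filter (fun i => v i ≤ x)).card := by
  constructor
  · intro h
    exact le_trans (orderStat_mem v hr hrn) (Finset.card_le_card (filter_le_mono v h))
  · intro h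
    exact csInf_le (os_set_bddBelow v hr) h

/-- there is an index achieving at least the order statistic -/
lemma exists_ge_orderStat (hr : 1 ≤ r) (hrn : r ≤ n) : ∃ i, orderStat v r ≤ v i := by
  have hn : 0 < n := lt_of_lt_of_le hr hrn
  have hcard := orderStat_mem v hr hrn
  have hpos : 0 < (Finset.univ.filter (fun i => v i ≤ orderStat v r)).card := lt_of_lt_of_le hr hcard
  obtain ⟨i, hi⟩ := Finset.card_pos.1 hpos
  -- take max over that filter
  set F := Finset.univ.filter (fun i => v i ≤ orderStat v r) with hF
  have hFne : F.Nonempty := ⟨i, hi⟩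
  set M := (F.image v).max' (hFne.image v) with hM
  obtain ⟨j, hjF, hjM⟩ := Finset.mem_image.1 ((F.image v).max'_mem (hFne.image v))
  refine ⟨j, ?_⟩
  rw [hjM]
  -- claim M = orderStat: F ⊆ filter(≤ M)
  have hsub : F ⊆ Finset.univ.filter (fun i => v i ≤ M) := by
    intro k hk
    simp only [Finset.mem_filter, Finset.mem_univ, true_and]
    exact Finset.le_max' _ _ (Finset.mem_image_of_mem v hk)
  have : r ≤ (Finset.univ.filter (fun i => v i ≤ M)).card :=
    le_trans hcard (Finset.card_le_card hsub)
  exact (orderStat_le_iff v hr hrn M).2 this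

lemma concomMin_lt_iff (hr : 1 ≤ r) (hrn : r ≤ n) (w : Fin n → ℝ) (s : ℝ) :
    s < concomMin v w r ↔ ∀ i, orderStat v r ≤ v i → s < w i := by
  classical
  set Fs := Finset.univ.filter (fun i => orderStat v r ≤ v i) with hFs
  have hFsne : Fs.Nonempty := by
    obtain ⟨i, hi⟩ := exists_ge_orderStat v hr hrn
    exact ⟨i, by simp [hFs, hi]⟩
  have hset : {y : ℝ | ∃ i, orderStat v r ≤ v i ∧ w i = y} = ↑(Fs.image w) := by
    ext y
    simp [hFs, Finset.mem_image, and_comm]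
  have hmin : concomMin v w r = (Fs.image w).min' (hFsne.image w) := by
    rw [concomMin, hset]
    exact (hFsne.image w).csInf_eq_min'
  rw [hmin, Finset.lt_min'_iff]
  constructor
  · intro h i hi
    exact h (w i) (Finset.mem_image_of_mem w (by simp [hFs, hi]))
  · intro h y hy
    obtain ⟨i, hi, rfl⟩ := Finset.mem_image.1 hy
    exact h i (by simpa [hFs] using hi)

end Det

section Comb

open Classical
variable {n r : ℕ}

/-- the basic event: coordinate `j` has rank `r`, the `r-1` coordinates in `S` are
strictly below it, the others strictly above with second coordinate `> s`, and the
second coordinate of `j` is `> s`. -/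
def Aset (n : ℕ) (s : ℝ) (j : Fin n) (S : Finset (Fin n)) : Set (Fin n → ℝ × ℝ) :=
  {p | s < (p j).2 ∧ ∀ i, i ≠ j →
    (if i ∈ S then (p i).1 < (p j).1 else ((p j).1 < (p i).1 ∧ s < (p i).2))}

/-- the target event. -/
def Eset (n r : ℕ) (s : ℝ) : Set (Fin n → ℝ × ℝ) :=
  {p | ∀ i, orderStat (fun k => (p k).1) r ≤ (p i).1 → s < (p i).2}

lemma Aset_mem_S_iff {s : ℝ} {j : Fin n} {S : Finset (Fin n)} {p : Fin n → ℝ × ℝ}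
    (hp : p ∈ Aset n s j S) (hj : j ∉ S) (i : Fin n) :
    i ∈ S ↔ ((p i).1 < (p j).1) := by
  by_cases hij : i = j
  · subst hij; simp [hj]
  · have h := hp.2 i hij
    by_cases hiS : i ∈ S
    · simp only [hiS, if_true] at h
      simp [hiS, h]
    · simp only [hiS, if_false] at h
      constructor
      · intro hc; exact absurd hc hiS
      · intro hlt; linarith [h.1]

lemma Aset_subset_Eset (hr : 1 ≤ r) (hrn : r ≤ n) {s : ℝ} {j : Fin n} {S : Finset (Fin n)}
    (hj : j ∉ S) (hc : S.card = r - 1) :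
    Aset n s j S ⊆ Eset n r s := by
  intro p hp
  set x : Fin n → ℝ := fun k => (p k).1 with hx
  intro i hi
  by_cases hiS : i ∈ S
  · -- impossible: orderStat ≤ x i fails for i ∈ S
    exfalso
    have hlt : x i < x j := (Aset_mem_S_iff hp hj i).1 hiS
    have hsub : (Finset.univ.filter (fun k => x k ≤ x i)) ⊆ S := by
      intro k hk
      have hk2 : x k ≤ x i := (Finset.mem_filter.1 hk).2
      rw [Aset_mem_S_iff hp hj k]
      exact lt_of_le_of_lt hk2 hlt
    have hcard := Finset.card_le_card hsub
    rw [hc] at hcard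
    have := (orderStat_le_iff x hr hrn (x i)).1 hi
    omega
  · by_cases hij : i = j
    · subst hij; exact hp.1
    · have h := hp.2 i hij
      simp only [hiS, if_false] at h
      exact h.2

lemma Aset_rank {s : ℝ} {j : Fin n} {S : Finset (Fin n)} {p : Fin n → ℝ × ℝ}
    (hp : p ∈ Aset n s j S) (hj : j ∉ S) :
    (Finset.univ.filter (fun k => (p k).1 < (p j).1)) = S := by
  ext k
  simp only [Finset.mem_filter, Finset.mem_univ, true_and]
  exact (Aset_mem_S_iff hp hj k).symm

lemma Aset_disjoint_aux (hr : 1 ≤ r) {s : ℝ} {j j' : Fin n} {S S' : Finset (Fin n)}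
    (hj : j ∉ S) (hj' : j' ∉ S') (hc : S.card = r - 1) (hc' : S'.card = r - 1)
    {p : Fin n → ℝ × ℝ} (hp : p ∈ Aset n s j S) (hp' : p ∈ Aset n s j' S')
    (hlt : (p j).1 < (p j').1) : False := by
  -- then S ∪ {j} ⊆ S', giving card S' ≥ r
  have hsub : insert j S ⊆ S' := by
    intro k hk
    rw [Aset_mem_S_iff hp' hj' k]
    rcases Finset.mem_insert.1 hk with rfl | hkS
    · exact hlt
    · exact lt_trans ((Aset_mem_S_iff hp hj k).1 hkS) hlt
  have hcard := Finset.card_le_card hsub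
  rw [Finset.card_insert_of_notMem hj, hc, hc'] at hcard
  omega

lemma Aset_disjoint (hr : 1 ≤ r) {s : ℝ} {j j' : Fin n} {S S' : Finset (Fin n)}
    (hj : j ∉ S) (hj' : j' ∉ S') (hc : S.card = r - 1) (hc' : S'.card = r - 1)
    (hne : (j, S) ≠ (j', S')) :
    Disjoint (Aset n s j S) (Aset n s j' S') := by
  rw [Set.disjoint_left]
  intro p hp hp'
  by_cases hjj : j = j'
  · subst hjj
    have : S = S' := by
      rw [← Aset_rank hp hj, ← Aset_rank hp' hj']
    exact hne (by rw [this])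
  · have h1 := hp.2 j' (Ne.symm hjj)
    by_cases hj'S : j' ∈ S
    · simp only [hj'S, if_true] at h1
      exact Aset_disjoint_aux hr hj' hj hc' hc hp' hp h1
    · simp only [hj'S, if_false] at h1
      exact Aset_disjoint_aux hr hj hj' hc hc' hp hp' h1.1

lemma Eset_subset_union (hr : 1 ≤ r) (hrn : r ≤ n) {s : ℝ} {p : Fin n → ℝ × ℝ}
    (hp : p ∈ Eset n r s)
    (hdist : ∀ i k, i ≠ k → (p i).1 ≠ (p k).1) :
    ∃ j, ∃ S ∈ Finset.powersetCard (r - 1) (Finset.univ.erase j), p ∈ Aset n s j S := by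
  set x : Fin n → ℝ := fun k => (p k).1 with hx
  set a := orderStat x r with ha
  have hmem := orderStat_mem x hr hrn
  set F := Finset.univ.filter (fun i => x i ≤ a) with hF
  have hFne : F.Nonempty := Finset.card_pos.1 (lt_of_lt_of_le hr hmem)
  -- j := index of max of x on F; then x j = a
  obtain ⟨j, hjF, hjM⟩ := Finset.mem_image.1 ((F.image x).max'_mem (hFne.image x))
  have hxja : x j ≤ a := (Finset.mem_filter.1 hjF).2
  have hja : x j = a := by
    by_contra hne
    have hlt : x j < a := lt_of_le_of_ne hxja hne
    have hsub : F ⊆ Finset.univ.filter (fun i => x i ≤ x j) := by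
      intro k hk
      simp only [Finset.mem_filter, Finset.mem_univ, true_and]
      rw [hjM]
      exact Finset.le_max' _ _ (Finset.mem_image_of_mem x hk)
    have hcard : r ≤ (Finset.univ.filter (fun i => x i ≤ x j)).card :=
      le_trans hmem (Finset.card_le_card hsub)
    have := (orderStat_le_iff x hr hrn (x j)).2 hcard
    rw [← ha] at this
    linarith
  -- S := strictly-below set
  set S := Finset.univ.filter (fun i => x i < x j) with hS
  have hjS : j ∉ S := by simp [hS]
  -- F = insert j S
  have hFS : F = insert j S := by
    ext k
    simp only [hF, hS, Finset.mem_filter, Finset.mem_univ, true_and, Finset.mem_insert]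
    constructor
    · intro hk
      rcases lt_or_eq_of_le hk with h | h
      · right; rw [← hja] at h; exact h
      · left
        by_contra hkj
        refine hdist k j hkj ?_
        show x k = x j
        rw [hja]; exact h
    · rintro (rfl | hk)
      · exact hxja
      · rw [← hja]; exact le_of_lt hk
  -- card F = r  (else contradiction via max of S)
  have hcardF : F.card = r := by
    by_contra hne
    have hgt : r < F.card := lt_of_le_of_ne hmem (Ne.symm hne)
    have hScard : r ≤ S.card := by
      rw [hFS, Finset.card_insert_of_notMem hjS] at hgt
      omega
    have hSne : S.Nonempty := Finset.card_pos.1 (lt_of_lt_of_le hr hScard)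
    obtain ⟨m, hmS, hmM⟩ := Finset.mem_image.1 ((S.image x).max'_mem (hSne.image x))
    have hsub : S ⊆ Finset.univ.filter (fun i => x i ≤ x m) := by
      intro k hk
      simp only [Finset.mem_filter, Finset.mem_univ, true_and]
      rw [hmM]
      exact Finset.le_max' _ _ (Finset.mem_image_of_mem x hk)
    have hcard : r ≤ (Finset.univ.filter (fun i => x i ≤ x m)).card :=
      le_trans hScard (Finset.card_le_card hsub)
    have h2 := (orderStat_le_iff x hr hrn (x m)).2 hcard
    have hmlt : x m < x j := (Finset.mem_filter.1 hmS).2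
    rw [← ha] at h2
    rw [hja] at hmlt
    linarith
  have hScard : S.card = r - 1 := by
    rw [hFS, Finset.card_insert_of_notMem hjS] at hcardF
    omega
  refine ⟨j, S, ?_, ?_, ?_⟩
  · rw [Finset.mem_powersetCard]
    exact ⟨fun k hk => Finset.mem_erase.2 ⟨fun h => hjS (h ▸ hk), Finset.mem_univ k⟩, hScard⟩
  · -- s < (p j).2
    exact hp j (le_of_eq hja.symm)
  · intro i hij
    by_cases hiS : i ∈ S
    · simp only [hiS, if_true]
      exact (Finset.mem_filter.1 hiS).2
    · simp only [hiS, if_false]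
      have hxi : x j < x i := by
        have h1 : ¬ x i < x j := by simpa [hS] using hiS
        have h2 : x i ≠ x j := hdist i j hij
        rcases lt_or_gt_of_ne h2 with h | h
        · exact absurd h h1
        · exact h
      refine ⟨hxi, hp i ?_⟩
      show a ≤ x i
      rw [← hja]
      exact le_of_lt hxi

end Comb

section Meas

open Classical MeasureTheory
variable {n r : ℕ}

lemma measurableSet_orderStat_le (hr : 1 ≤ r) (hrn : r ≤ n) (i : Fin n) :
    MeasurableSet {p : Fin n → ℝ × ℝ | orderStat (fun k => (p k).1) r ≤ (p i).1} := by
  have hset : {p : Fin n → ℝ × ℝ | orderStat (fun k => (p k).1) r ≤ (p i).1}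
      = {p : Fin n → ℝ × ℝ |
          r ≤ ∑ k : Fin n, if (p k).1 ≤ (p i).1 then 1 else 0} := by
    ext p
    rw [Set.mem_setOf_eq, Set.mem_setOf_eq, orderStat_le_iff _ hr hrn, Finset.card_filter]
  rw [hset]
  have hc : Measurable (fun p : Fin n → ℝ × ℝ =>
      ∑ k : Fin n, if (p k).1 ≤ (p i).1 then (1 : ℕ) else 0) := by
    refine Finset.measurable_sum _ (fun k _ => ?_)
    refine Measurable.ite ?_ measurable_const measurable_const
    exact measurableSet_le ((measurable_pi_apply k).fst) ((measurable_pi_apply i).fst)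
  exact hc (MeasurableSet.of_discrete (s := {m : ℕ | r ≤ m}))

lemma measurableSet_Eset (hr : 1 ≤ r) (hrn : r ≤ n) (s : ℝ) :
    MeasurableSet (Eset n r s) := by
  have : Eset n r s = ⋂ i : Fin n,
      ({p : Fin n → ℝ × ℝ | orderStat (fun k => (p k).1) r ≤ (p i).1}ᶜ
        ∪ {p : Fin n → ℝ × ℝ | s < (p i).2}) := by
    ext p
    simp only [Eset, Set.mem_setOf_eq, Set.mem_iInter, Set.mem_union, Set.mem_compl_iff]
    refine forall_congr' (fun i => ?_)
    tauto
  rw [this]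
  refine MeasurableSet.iInter (fun i => MeasurableSet.union ?_ ?_)
  · exact (measurableSet_orderStat_le hr hrn i).compl
  · exact measurableSet_lt measurable_const ((measurable_pi_apply i).snd)

lemma measurableSet_Aset (s : ℝ) (j : Fin n) (S : Finset (Fin n)) :
    MeasurableSet (Aset n s j S) := by
  have : Aset n s j S = {p : Fin n → ℝ × ℝ | s < (p j).2} ∩
      ⋂ i : Fin n, {p : Fin n → ℝ × ℝ | i ≠ j →
        (if i ∈ S then (p i).1 < (p j).1 else ((p j).1 < (p i).1 ∧ s < (p i).2))} := by
    ext p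
    simp only [Aset, Set.mem_setOf_eq, Set.mem_inter_iff, Set.mem_iInter]
  rw [this]
  refine MeasurableSet.inter
    (measurableSet_lt measurable_const ((measurable_pi_apply j).snd))
    (MeasurableSet.iInter (fun i => ?_))
  by_cases hij : i = j
  · simp only [hij]
    have : {p : Fin n → ℝ × ℝ | j ≠ j →
        (if j ∈ S then (p j).1 < (p j).1 else ((p j).1 < (p j).1 ∧ s < (p j).2))}
        = Set.univ := by
      ext p; simp
    rw [this]; exact MeasurableSet.univ
  · have : {p : Fin n → ℝ × ℝ | i ≠ j →
        (if i ∈ S then (p i).1 < (p j).1 else ((p j).1 < (p i).1 ∧ s < (p i).2))}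
        = {p : Fin n → ℝ × ℝ |
          (if i ∈ S then (p i).1 < (p j).1 else ((p j).1 < (p i).1 ∧ s < (p i).2))} := by
      ext p; simp [hij]
    rw [this]
    by_cases hiS : i ∈ S
    · simp only [hiS, if_true]
      exact measurableSet_lt ((measurable_pi_apply i).fst) ((measurable_pi_apply j).fst)
    · simp only [hiS, if_false]
      rw [Set.setOf_and]
      exact MeasurableSet.inter
        (measurableSet_lt ((measurable_pi_apply j).fst) ((measurable_pi_apply i).fst))
        (measurableSet_lt measurable_const ((measurable_pi_apply i).snd))

/-- the "some first coordinates coincide" set -/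
def Nset (n : ℕ) : Set (Fin n → ℝ × ℝ) :=
  ⋃ i : Fin n, ⋃ k : Fin n, ⋃ _h : i ≠ k, {p | (p i).1 = (p k).1}

lemma measurableSet_Nset : MeasurableSet (Nset n) := by
  refine MeasurableSet.iUnion (fun i => MeasurableSet.iUnion (fun k =>
    MeasurableSet.iUnion (fun _ => ?_)))
  exact measurableSet_eq_fun ((measurable_pi_apply i).fst) ((measurable_pi_apply k).fst)

end Meas

section MeasureAset

open Classical MeasureTheory

lemma forall_ne_iff_succAbove {m : ℕ} (j : Fin (m+1)) (P : Fin (m+1) → Prop) :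
    (∀ i, i ≠ j → P i) ↔ ∀ l : Fin m, P (j.succAbove l) := by
  constructor
  · intro h l; exact h _ (Fin.succAbove_ne j l)
  · intro h i hij
    obtain ⟨l, rfl⟩ := Fin.exists_succAbove_eq_iff.2 hij
    exact h l

lemma map_univ_succAboveEmb {m : ℕ} (j : Fin (m+1)) :
    Finset.univ.map (Fin.succAboveEmb j) = Finset.univ.erase j := by
  ext k
  simp only [Finset.mem_map, Finset.mem_univ, true_and, Finset.mem_erase, and_true]
  constructor
  · rintro ⟨l, rfl⟩
    exact Fin.succAbove_ne j l
  · intro h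
    obtain ⟨l, rfl⟩ := Fin.exists_succAbove_eq_iff.2 h
    exact ⟨l, rfl⟩

lemma measure_Aset {m : ℕ} (ν : Measure (ℝ × ℝ)) [IsProbabilityMeasure ν]
    (s : ℝ) (j : Fin (m+1)) (S : Finset (Fin (m+1))) (hj : j ∉ S) :
    Measure.pi (fun _ : Fin (m+1) => ν) (Aset (m+1) s j S)
      = ∫⁻ z, {z' : ℝ × ℝ | s < z'.2}.indicator
          (fun z => ν {q : ℝ × ℝ | q.1 < z.1} ^ S.card *
            ν {q : ℝ × ℝ | z.1 < q.1 ∧ s < q.2} ^ (m - S.card)) z ∂ν := by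
  set π' := Measure.pi (fun _ : Fin m => ν) with hπ'
  have hmp := measurePreserving_piFinSuccAbove (fun _ : Fin (m+1) => ν) j
  set e := MeasurableEquiv.piFinSuccAbove (fun _ : Fin (m+1) => ℝ × ℝ) j with he
  have hA := measurableSet_Aset s j S
  have hB : MeasurableSet (e.symm ⁻¹' (Aset (m+1) s j S)) :=
    e.symm.measurable hA
  have key : Measure.pi (fun _ : Fin (m+1) => ν) (Aset (m+1) s j S)
      = (ν.prod π') (e.symm ⁻¹' (Aset (m+1) s j S)) := by
    have heq : Aset (m+1) s j S = e ⁻¹' (e.symm ⁻¹' (Aset (m+1) s j S)) := by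
      ext p; simp
    conv_lhs => rw [heq]
    exact hmp.measure_preimage hB.nullMeasurableSet
  rw [key, Measure.prod_apply hB]
  refine lintegral_congr (fun z => ?_)
  -- describe the slice
  have hslice : ∀ q : Fin m → ℝ × ℝ,
      ((z, q) ∈ e.symm ⁻¹' (Aset (m+1) s j S) ↔
        (s < z.2 ∧ ∀ l : Fin m,
          q l ∈ (if j.succAbove l ∈ S then {w : ℝ × ℝ | w.1 < z.1}
            else {w : ℝ × ℝ | z.1 < w.1 ∧ s < w.2}))) := by
    intro q
    have hsymm : e.symm (z, q) = j.insertNth z q := by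
      rw [he, MeasurableEquiv.piFinSuccAbove_symm_apply]
      rfl
    rw [Set.mem_preimage, hsymm]
    unfold Aset
    rw [Set.mem_setOf_eq, Fin.insertNth_apply_same]
    refine and_congr Iff.rfl ?_
    rw [forall_ne_iff_succAbove j]
    refine forall_congr' (fun l => ?_)
    rw [Fin.insertNth_apply_succAbove]
    by_cases hlS : j.succAbove l ∈ S
    · simp [hlS]
    · simp [hlS]
  by_cases hz : s < z.2
  · have hset : Prod.mk z ⁻¹' (e.symm ⁻¹' (Aset (m+1) s j S))
        = Set.univ.pi (fun l : Fin m =>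
            (if j.succAbove l ∈ S then {w : ℝ × ℝ | w.1 < z.1}
              else {w : ℝ × ℝ | z.1 < w.1 ∧ s < w.2})) := by
      ext q
      rw [Set.mem_preimage, hslice q, Set.mem_univ_pi]
      simp [hz]
    rw [hset, hπ', Measure.pi_pi]
    have hind : {z' : ℝ × ℝ | s < z'.2}.indicator
        (fun z => ν {q : ℝ × ℝ | q.1 < z.1} ^ S.card *
          ν {q : ℝ × ℝ | z.1 < q.1 ∧ s < q.2} ^ (m - S.card)) z
        = ν {q : ℝ × ℝ | q.1 < z.1} ^ S.card *
          ν {q : ℝ × ℝ | z.1 < q.1 ∧ s < q.2} ^ (m - S.card) :=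
      Set.indicator_of_mem (show z ∈ {z' : ℝ × ℝ | s < z'.2} from hz) _
    rw [hind]
    -- now compute the product
    have hprod : (∏ l : Fin m, ν (if j.succAbove l ∈ S then {w : ℝ × ℝ | w.1 < z.1}
          else {w : ℝ × ℝ | z.1 < w.1 ∧ s < w.2}))
        = ∏ i ∈ Finset.univ.erase j, ν (if i ∈ S then {w : ℝ × ℝ | w.1 < z.1}
          else {w : ℝ × ℝ | z.1 < w.1 ∧ s < w.2}) := by
      rw [← map_univ_succAboveEmb j, Finset.prod_map]
      rfl
    rw [hprod]
    have hSsub : S ⊆ Finset.univ.erase j := by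
      intro i hiS
      exact Finset.mem_erase.2 ⟨fun h => hj (h ▸ hiS), Finset.mem_univ i⟩
    have hsplit : (∏ i ∈ Finset.univ.erase j, ν (if i ∈ S then {w : ℝ × ℝ | w.1 < z.1}
          else {w : ℝ × ℝ | z.1 < w.1 ∧ s < w.2}))
        = (∏ i ∈ (Finset.univ.erase j).filter (fun i => i ∈ S),
            ν {w : ℝ × ℝ | w.1 < z.1}) *
          ∏ i ∈ (Finset.univ.erase j).filter (fun i => i ∉ S),
            ν {w : ℝ × ℝ | z.1 < w.1 ∧ s < w.2} := by
      rw [← Finset.prod_ite]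
      refine Finset.prod_congr rfl (fun i _ => ?_)
      exact apply_ite ν _ _ _
    rw [hsplit, Finset.prod_const, Finset.prod_const]
    congr 1
    · congr 1
      have : (Finset.univ.erase j).filter (fun i => i ∈ S) = S := by
        ext i
        simp only [Finset.mem_filter, Finset.mem_erase, Finset.mem_univ, and_true, true_and]
        constructor
        · exact fun h => h.2
        · intro h
          refine ⟨fun hij => hj ?_, h⟩
          rwa [hij] at h
      rw [this]
    · congr 1
      rw [Finset.filter_not, Finset.card_sdiff_of_subset]
      · have h1 : (Finset.univ.erase j).card = m := by
          rw [Finset.card_erase_of_mem (Finset.mem_univ j), Finset.card_univ, Fintype.card_fin]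
          omega
        have h2 : (Finset.univ.erase j).filter (fun i => i ∈ S) = S := by
          ext i
          simp only [Finset.mem_filter, Finset.mem_erase, Finset.mem_univ, and_true, true_and]
          constructor
          · exact fun h => h.2
          · intro h
            refine ⟨fun hij => hj ?_, h⟩
            rwa [hij] at h
        rw [h1, h2]
      · exact Finset.filter_subset _ _
  · have hset : Prod.mk z ⁻¹' (e.symm ⁻¹' (Aset (m+1) s j S)) = ∅ := by
      ext q
      rw [Set.mem_preimage, hslice q]
      simp [hz]
    rw [hset]
    rw [Set.indicator_of_notMem (show z ∉ {z' : ℝ × ℝ | s < z'.2} from hz)]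
    simp

end MeasureAset

section Analytic

open MeasureTheory

variable {f : ℝ → ℝ → ℝ}

lemma g_meas (hf_meas : Measurable (Function.uncurry f)) :
    Measurable (fun q : ℝ × ℝ => ENNReal.ofReal (f q.1 q.2)) :=
  ENNReal.measurable_ofReal.comp hf_meas

lemma nu_prod_apply (hf_meas : Measurable (Function.uncurry f))
    {A B : Set ℝ} (hA : MeasurableSet A) (hB : MeasurableSet B) :
    (volume : Measure (ℝ × ℝ)).withDensity (fun q => ENNReal.ofReal (f q.1 q.2)) (A ×ˢ B)
      = ∫⁻ x in A, ∫⁻ y in B, ENNReal.ofReal (f x y) := by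
  rw [withDensity_apply _ (hA.prod hB), Measure.volume_eq_prod, ← Measure.prod_restrict]
  rw [lintegral_prod _ (g_meas hf_meas).aemeasurable]

lemma I0_toReal (hf_nonneg : ∀ x y, 0 ≤ f x y) (hf_meas : Measurable (Function.uncurry f))
    (s : ℝ) (a b : ℕ)
    (hprob : IsProbabilityMeasure
      ((volume : Measure (ℝ × ℝ)).withDensity (fun q => ENNReal.ofReal (f q.1 q.2))))
    (h0 : (volume : Measure (ℝ × ℝ)).withDensity (fun q => ENNReal.ofReal (f q.1 q.2))
      {q : ℝ × ℝ | q.1 ≤ 0} = 0) :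
    (∫⁻ z, {z' : ℝ × ℝ | s < z'.2}.indicator
        (fun z => (volume : Measure (ℝ × ℝ)).withDensity
            (fun q => ENNReal.ofReal (f q.1 q.2)) {q : ℝ × ℝ | q.1 < z.1} ^ a *
          (volume : Measure (ℝ × ℝ)).withDensity
            (fun q => ENNReal.ofReal (f q.1 q.2)) {q : ℝ × ℝ | z.1 < q.1 ∧ s < q.2} ^ b) z
      ∂((volume : Measure (ℝ × ℝ)).withDensity (fun q => ENNReal.ofReal (f q.1 q.2)))).toReal
    = ∫ x in Set.Ioi (0 : ℝ),
        ((volume : Measure (ℝ × ℝ)).withDensity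
            (fun q => ENNReal.ofReal (f q.1 q.2)) {q : ℝ × ℝ | q.1 < x}).toReal ^ a *
        ((volume : Measure (ℝ × ℝ)).withDensity
            (fun q => ENNReal.ofReal (f q.1 q.2)) {q : ℝ × ℝ | x < q.1 ∧ s < q.2}).toReal ^ b *
        ∫ y in Set.Ioi s, f x y := by
  haveI := hprob
  set ν : Measure (ℝ × ℝ) :=
    (volume : Measure (ℝ × ℝ)).withDensity (fun q => ENNReal.ofReal (f q.1 q.2)) with hν
  set F : ℝ → ENNReal := fun c => ν {q : ℝ × ℝ | q.1 < c} with hF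
  set G : ℝ → ENNReal := fun c => ν {q : ℝ × ℝ | c < q.1 ∧ s < q.2} with hG
  set K : ℝ → ENNReal := fun c => F c ^ a * G c ^ b with hK
  set J : ℝ → ENNReal := fun x => ∫⁻ y in Set.Ioi s, ENNReal.ofReal (f x y) with hJ
  have hg : Measurable (fun q : ℝ × ℝ => ENNReal.ofReal (f q.1 q.2)) := g_meas hf_meas
  have hFmeas : Measurable F := by
    refine Monotone.measurable (fun c c' hcc => ?_)
    exact measure_mono (fun q hq => lt_of_lt_of_le hq hcc)
  have hGmeas : Measurable G := by
    refine Antitone.measurable (fun c c' hcc => ?_)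
    exact measure_mono (fun q hq => ⟨lt_of_le_of_lt hcc hq.1, hq.2⟩)
  have hKmeas : Measurable K := (hFmeas.pow_const a).mul (hGmeas.pow_const b)
  have hJmeas : Measurable J := by
    refine Measurable.lintegral_prod_right ?_
    exact hg.comp (measurable_fst.prodMk measurable_snd)
  have hindmeas : Measurable (fun z : ℝ × ℝ => {z' : ℝ × ℝ | s < z'.2}.indicator
      (fun z => F z.1 ^ a * G z.1 ^ b) z) := by
    refine Measurable.indicator ?_ ?_
    · exact ((hFmeas.comp measurable_fst).pow_const a).mul
        ((hGmeas.comp measurable_fst).pow_const b)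
    · exact measurableSet_lt measurable_const measurable_snd
  have hK_le_one : ∀ c, K c ≤ 1 := by
    intro c
    exact mul_le_one' (pow_le_one' (prob_le_one) a) (pow_le_one' (prob_le_one) b)
  -- Step 1: I0 as iterated Lebesgue integral
  have step1 : (∫⁻ z, {z' : ℝ × ℝ | s < z'.2}.indicator
      (fun z => F z.1 ^ a * G z.1 ^ b) z ∂ν)
      = ∫⁻ x, K x * J x ∂(volume : Measure ℝ) := by
    rw [hν, lintegral_withDensity_eq_lintegral_mul _ hg hindmeas]
    simp only [Pi.mul_apply]
    rw [Measure.volume_eq_prod, lintegral_prod (fun z : ℝ × ℝ => ENNReal.ofReal (f z.1 z.2) *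
      {z' : ℝ × ℝ | s < z'.2}.indicator (fun z => F z.1 ^ a * G z.1 ^ b) z)
      ((hg.mul hindmeas).aemeasurable)]
    refine lintegral_congr (fun x => ?_)
    have hptwise : ∀ y : ℝ, ENNReal.ofReal (f (x, y).1 (x, y).2) *
        {z' : ℝ × ℝ | s < z'.2}.indicator (fun z => F z.1 ^ a * G z.1 ^ b) (x, y)
        = (Set.Ioi s).indicator (fun y => ENNReal.ofReal (f x y) * K x) y := by
      intro y
      by_cases hy : s < y
      · rw [Set.indicator_of_mem (Set.mem_Ioi.2 hy),
          Set.indicator_of_mem (show (x, y) ∈ {z' : ℝ × ℝ | s < z'.2} from hy)]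
      · rw [Set.indicator_of_notMem (fun hc => hy (Set.mem_Ioi.1 hc)),
          Set.indicator_of_notMem (show (x, y) ∉ {z' : ℝ × ℝ | s < z'.2} from hy), mul_zero]
    refine Eq.trans (lintegral_congr hptwise) ?_
    rw [lintegral_indicator measurableSet_Ioi]
    have hm : Measurable fun y => ENNReal.ofReal (f x y) :=
      ENNReal.measurable_ofReal.comp (hf_meas.of_uncurry_left (x := x))
    rw [lintegral_mul_const _ hm]
    rw [mul_comm]
  rw [step1]
  -- Step 2: restrict to Ioi 0
  have hJint : ∀ {A : Set ℝ}, MeasurableSet A →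
      ∫⁻ x in A, J x ∂(volume : Measure ℝ) = ν (A ×ˢ Set.Ioi s) := by
    intro A hA
    rw [hν, nu_prod_apply hf_meas hA measurableSet_Ioi]
  have step2 : ∫⁻ x, K x * J x ∂(volume : Measure ℝ)
      = ∫⁻ x in Set.Ioi (0:ℝ), K x * J x ∂(volume : Measure ℝ) := by
    rw [← lintegral_add_compl (fun x => K x * J x) (measurableSet_Iic (a := (0:ℝ))),
      Set.compl_Iic]
    have hzero : ∫⁻ x in Set.Iic (0:ℝ), K x * J x ∂(volume : Measure ℝ) = 0 := by
      refine le_antisymm ?_ zero_le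
      have h1 : ∫⁻ x in Set.Iic (0:ℝ), K x * J x ∂(volume : Measure ℝ)
          ≤ ∫⁻ x in Set.Iic (0:ℝ), J x ∂(volume : Measure ℝ) := by
        refine lintegral_mono (fun x => ?_)
        calc K x * J x ≤ 1 * J x := mul_le_mul_left (hK_le_one x) _
        _ = J x := one_mul _
      refine le_trans h1 ?_
      rw [hJint measurableSet_Iic]
      have : ν (Set.Iic (0:ℝ) ×ˢ Set.Ioi s) ≤ ν {q : ℝ × ℝ | q.1 ≤ 0} :=
        measure_mono (fun q hq => hq.1)
      rw [h0] at this
      exact this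
    rw [hzero, zero_add]
  rw [step2]
  -- Step 3: toReal of restricted lintegral
  have hJfin : ∀ᵐ x ∂(volume : Measure ℝ), J x < ⊤ := by
    refine ae_lt_top hJmeas ?_
    have : ∫⁻ x, J x ∂(volume : Measure ℝ) = ν (Set.univ ×ˢ Set.Ioi s) := by
      rw [← hJint MeasurableSet.univ, Measure.restrict_univ]
    rw [this]
    exact ne_of_lt (lt_of_le_of_lt prob_le_one ENNReal.one_lt_top)
  have step3 : (∫⁻ x in Set.Ioi (0:ℝ), K x * J x ∂(volume : Measure ℝ)).toReal
      = ∫ x in Set.Ioi (0:ℝ), (K x * J x).toReal ∂(volume : Measure ℝ) := by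
    rw [← integral_toReal (f := fun x => K x * J x) ((hKmeas.mul hJmeas).aemeasurable.restrict) ?_]
    refine ae_restrict_of_ae (hJfin.mono (fun x hx => ?_))
    calc K x * J x ≤ 1 * J x := mul_le_mul_left (hK_le_one x) _
    _ = J x := one_mul _
    _ < ⊤ := hx
  rw [step3]
  -- Step 4: pointwise identification
  refine integral_congr_ae (Filter.Eventually.of_forall (fun x => ?_))
  have hJx : (J x).toReal = ∫ y in Set.Ioi s, f x y := by
    rw [integral_eq_lintegral_of_nonneg_ae
      (Filter.Eventually.of_forall (fun y => hf_nonneg x y))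
      ((hf_meas.of_uncurry_left (x := x)).aestronglyMeasurable)]
  have h1 : (K x * J x).toReal
      = (F x).toReal ^ a * (G x).toReal ^ b * (J x).toReal := by
    rw [ENNReal.toReal_mul]
    congr 1
    rw [show K x = F x ^ a * G x ^ b from rfl, ENNReal.toReal_mul,
      ENNReal.toReal_pow, ENNReal.toReal_pow]
  show (K x * J x).toReal = _
  rw [h1, hJx]

end Analytic


/-- with W_i(t) = W_i·φ(t), φ(0) = 1, the survival function of the minimum of
the concomitants at time t = 0,
  D(s) = P{min(W_{[r:n]}(0), ..., W_{[n:n]}(0)) > s},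
satisfies D(s) = n·C(n-1,r-1)·∫_0^∞ F_X(x)^{r-1}·[P{X>x, W>s}]^{n-r}·(∫_s^∞ f(x,y) dy) dx. -/
theorem statement9
    {Ω : Type*} [MeasurableSpace Ω] (μ : Measure Ω) [IsProbabilityMeasure μ]
    (n r : ℕ) (hr : 1 ≤ r) (hrn : r ≤ n)
    (X W : Fin n → Ω → ℝ)
    (hXmeas : ∀ i, Measurable (X i)) (hWmeas : ∀ i, Measurable (W i))
    (f : ℝ → ℝ → ℝ) (hf_nonneg : ∀ x y, 0 ≤ f x y)
    (hf_meas : Measurable (Function.uncurry f))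
    (hindep : iIndepFun (fun i ω => (X i ω, W i ω)) μ)
    (hlaw : ∀ i, Measure.map (fun ω => (X i ω, W i ω)) μ =
      (volume : Measure (ℝ × ℝ)).withDensity (fun p => ENNReal.ofReal (f p.1 p.2)))
    (hX_nonneg : ∀ i, ∀ᵐ ω ∂μ, 0 ≤ X i ω)
    (φ : ℝ → ℝ) (hφ_cont : ContinuousOn φ (Set.Ici 0))
    (hφ_anti : AntitoneOn φ (Set.Ici 0))
    (hφ_mem : ∀ u ∈ Set.Ici (0 : ℝ), φ u ∈ Set.Ioc (0 : ℝ) 1)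
    (hφ0 : φ 0 = 1)
    (s : ℝ) (hs : 0 ≤ s) :
    (μ {ω | s < concomMin (fun i => X i ω) (fun i => W i ω * φ 0) r}).toReal
      = (n : ℝ) * ((n - 1).choose (r - 1) : ℝ) *
        ∫ x in Set.Ioi (0 : ℝ),
          (μ {ω | X ⟨0, by omega⟩ ω < x}).toReal ^ (r - 1) *
          (μ {ω | x < X ⟨0, by omega⟩ ω ∧ s < W ⟨0, by omega⟩ ω}).toReal ^ (n - r) *
          ∫ y in Set.Ioi s, f x y := by
  classical
  obtain ⟨m, rfl⟩ : ∃ m, n = m + 1 := ⟨n - 1, by omega⟩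
  set g : ℝ × ℝ → ENNReal := fun q => ENNReal.ofReal (f q.1 q.2) with hg
  set ν : Measure (ℝ × ℝ) := (volume : Measure (ℝ × ℝ)).withDensity g with hνdef
  have hYmeas : ∀ i, Measurable (fun ω => (X i ω, W i ω)) :=
    fun i => (hXmeas i).prodMk (hWmeas i)
  haveI hνprob : IsProbabilityMeasure ν := by
    rw [← hlaw ⟨0, by omega⟩]
    exact Measure.isProbabilityMeasure_map (hYmeas _).aemeasurable
  have hprob' : IsProbabilityMeasure
      ((volume : Measure (ℝ × ℝ)).withDensity (fun q => ENNReal.ofReal (f q.1 q.2))) := by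
    rw [← hg, ← hνdef]; exact hνprob
  set Φ : Ω → (Fin (m+1) → ℝ × ℝ) := fun ω i => (X i ω, W i ω) with hΦdef
  have hΦmeas : Measurable Φ := measurable_pi_lambda _ (fun i => hYmeas i)
  set π : Measure (Fin (m+1) → ℝ × ℝ) := Measure.pi (fun _ : Fin (m+1) => ν) with hπdef
  -- the law of the whole vector is the product measure
  have hmap : Measure.map Φ μ = π := by
    rw [hπdef]
    refine (Measure.pi_eq (fun sets hsets => ?_)).symm
    rw [Measure.map_apply hΦmeas (MeasurableSet.univ_pi hsets)]
    have hpre : Φ ⁻¹' (Set.univ.pi sets)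
        = ⋂ i ∈ Finset.univ, (fun ω => (X i ω, W i ω)) ⁻¹' sets i := by
      ext ω
      simp [hΦdef, Set.mem_univ_pi]
    rw [hpre, iIndepFun_iff_measure_inter_preimage_eq_mul.1 hindep Finset.univ
      (fun i _ => hsets i)]
    refine Finset.prod_congr rfl (fun i _ => ?_)
    rw [← Measure.map_apply (hYmeas i) (hsets i), hlaw i]
  -- identify the event
  have hEmeas := measurableSet_Eset (n := m+1) hr hrn s
  have hev : {ω | s < concomMin (fun i => X i ω) (fun i => W i ω * φ 0) r}
      = Φ ⁻¹' Eset (m+1) r s := by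
    ext ω
    rw [Set.mem_setOf_eq, Set.mem_preimage]
    have hw : (fun i => W i ω * φ 0) = fun i => W i ω := by
      funext i; rw [hφ0, mul_one]
    rw [hw, concomMin_lt_iff _ hr hrn]
    exact Iff.rfl
  have hμev : μ {ω | s < concomMin (fun i => X i ω) (fun i => W i ω * φ 0) r}
      = π (Eset (m+1) r s) := by
    rw [hev, ← hmap, Measure.map_apply hΦmeas hEmeas]
  -- the coincidence set is null
  have hνfst : ∀ c : ℝ, ν {q : ℝ × ℝ | q.1 = c} = 0 := by
    intro c
    have hvol : (volume : Measure (ℝ × ℝ)) ({c} ×ˢ (Set.univ : Set ℝ)) = 0 := by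
      rw [Measure.volume_eq_prod, Measure.prod_prod, Real.volume_singleton, zero_mul]
    have hseteq : {q : ℝ × ℝ | q.1 = c} = {c} ×ˢ (Set.univ : Set ℝ) := by
      ext q; exact ⟨fun h => ⟨h, trivial⟩, fun h => h.1⟩
    rw [hνdef, hseteq]
    exact (withDensity_absolutelyContinuous _ _) hvol
  have hπN : π (Nset (m+1)) = 0 := by
    refine measure_iUnion_null (fun i => measure_iUnion_null (fun k =>
      measure_iUnion_null (fun hik => ?_)))
    have hmeas_ik : MeasurableSet {p : Fin (m+1) → ℝ × ℝ | (p i).1 = (p k).1} :=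
      measurableSet_eq_fun ((measurable_pi_apply i).fst) ((measurable_pi_apply k).fst)
    rw [← hmap, Measure.map_apply hΦmeas hmeas_ik]
    -- μ {ω | X i ω = X k ω} = 0 via pairwise independence
    have hpair : ProbabilityTheory.IndepFun (fun ω => (X i ω, W i ω))
        (fun ω => (X k ω, W k ω)) μ := hindep.indepFun hik
    have hmapp : Measure.map (fun ω => ((X i ω, W i ω), (X k ω, W k ω))) μ
        = ν.prod ν := by
      rw [(ProbabilityTheory.indepFun_iff_map_prod_eq_prod_map_map
        (hYmeas i).aemeasurable (hYmeas k).aemeasurable).1 hpair, hlaw i, hlaw k]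
    have hD : MeasurableSet {z : (ℝ × ℝ) × (ℝ × ℝ) | z.1.1 = z.2.1} :=
      measurableSet_eq_fun (measurable_fst.fst) (measurable_snd.fst)
    have hΦpre : Φ ⁻¹' {p : Fin (m+1) → ℝ × ℝ | (p i).1 = (p k).1}
        = (fun ω => ((X i ω, W i ω), (X k ω, W k ω))) ⁻¹'
          {z : (ℝ × ℝ) × (ℝ × ℝ) | z.1.1 = z.2.1} := by
      ext ω; simp [hΦdef]
    rw [hΦpre, ← Measure.map_apply ((hYmeas i).prodMk (hYmeas k)) hD, hmapp]
    rw [Measure.prod_apply hD]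
    have hz : ∀ u : ℝ × ℝ, ν (Prod.mk u ⁻¹' {z : (ℝ × ℝ) × (ℝ × ℝ) | z.1.1 = z.2.1}) = 0 := by
      intro u
      have : Prod.mk u ⁻¹' {z : (ℝ × ℝ) × (ℝ × ℝ) | z.1.1 = z.2.1}
          = {q : ℝ × ℝ | q.1 = u.1} := by
        ext q; simp [eq_comm]
      rw [this]
      exact hνfst u.1
    rw [lintegral_congr hz, lintegral_zero]
  -- the union and its measure
  set I0 : ENNReal := ∫⁻ z, {z' : ℝ × ℝ | s < z'.2}.indicator
      (fun z => ν {q : ℝ × ℝ | q.1 < z.1} ^ (r - 1) *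
        ν {q : ℝ × ℝ | z.1 < q.1 ∧ s < q.2} ^ ((m + 1) - r)) z ∂ν with hI0def
  set U : Set (Fin (m+1) → ℝ × ℝ) := ⋃ j ∈ (Finset.univ : Finset (Fin (m+1))),
      ⋃ S ∈ Finset.powersetCard (r-1) (Finset.univ.erase j), Aset (m+1) s j S with hUdef
  have hvalid : ∀ (j : Fin (m+1)) (S : Finset (Fin (m+1))),
      S ∈ Finset.powersetCard (r-1) (Finset.univ.erase j) → j ∉ S ∧ S.card = r - 1 := by
    intro j S hS
    rw [Finset.mem_powersetCard] at hS
    exact ⟨fun h => (Finset.mem_erase.1 (hS.1 h)).1 rfl, hS.2⟩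
  have hAval : ∀ (j : Fin (m+1)) (S : Finset (Fin (m+1))),
      S ∈ Finset.powersetCard (r-1) (Finset.univ.erase j) →
      π (Aset (m+1) s j S) = I0 := by
    intro j S hS
    obtain ⟨hjS, hcard⟩ := hvalid j S hS
    rw [hπdef, measure_Aset ν s j S hjS, hcard, hI0def]
    have hexp : m - (r - 1) = (m + 1) - r := by omega
    rw [hexp]
  have hUsubE : U ⊆ Eset (m+1) r s := by
    intro p hp
    rw [hUdef] at hp
    simp only [Set.mem_iUnion] at hp
    obtain ⟨j, _, S, hS, hpA⟩ := hp
    obtain ⟨hjS, hcard⟩ := hvalid j S hS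
    exact Aset_subset_Eset hr hrn hjS hcard hpA
  have hEsubUN : Eset (m+1) r s ⊆ U ∪ Nset (m+1) := by
    intro p hp
    by_cases hd : ∀ i k : Fin (m+1), i ≠ k → (p i).1 ≠ (p k).1
    · left
      obtain ⟨j, S, hS, hpA⟩ := Eset_subset_union hr hrn hp hd
      rw [hUdef]
      simp only [Set.mem_iUnion]
      exact ⟨j, Finset.mem_univ j, S, hS, hpA⟩
    · right
      push_neg at hd
      obtain ⟨i, k, hik, heq⟩ := hd
      simp only [Nset, Set.mem_iUnion]
      exact ⟨i, k, hik, heq⟩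
  have hπE : π (Eset (m+1) r s) = π U := by
    refine le_antisymm ?_ (measure_mono hUsubE)
    calc π (Eset (m+1) r s) ≤ π (U ∪ Nset (m+1)) := measure_mono hEsubUN
    _ ≤ π U + π (Nset (m+1)) := measure_union_le _ _
    _ = π U := by rw [hπN, add_zero]
  have hπU : π U = ((m+1 : ℕ) : ENNReal) * ((m.choose (r-1) : ℕ) : ENNReal) * I0 := by
    rw [hUdef]
    rw [measure_biUnion_finset ?_ ?_]
    · have hsummand : ∀ j ∈ (Finset.univ : Finset (Fin (m+1))),
          π (⋃ S ∈ Finset.powersetCard (r-1) (Finset.univ.erase j), Aset (m+1) s j S)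
          = ((m.choose (r-1) : ℕ) : ENNReal) * I0 := by
        intro j _
        rw [measure_biUnion_finset ?_ ?_]
        · rw [Finset.sum_congr rfl (hAval j), Finset.sum_const, Finset.card_powersetCard,
            Finset.card_erase_of_mem (Finset.mem_univ j), Finset.card_univ, Fintype.card_fin]
          have : m + 1 - 1 = m := by omega
          rw [this, nsmul_eq_mul]
        · -- pairwise disjoint for fixed j
          intro S hS S' hS' hne
          exact Aset_disjoint hr (hvalid j S hS).1 (hvalid j S' hS').1
            (hvalid j S hS).2 (hvalid j S' hS').2 (by simp [hne])
        · exact fun S _ => measurableSet_Aset s j S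
      rw [Finset.sum_congr rfl hsummand, Finset.sum_const, Finset.card_univ,
        Fintype.card_fin, nsmul_eq_mul, mul_assoc]
    · -- outer disjointness
      intro j _ j' _ hjj'
      rw [Function.onFun, Set.disjoint_left]
      intro p hp hp'
      simp only [Set.mem_iUnion] at hp hp'
      obtain ⟨S, hS, hpS⟩ := hp
      obtain ⟨S', hS', hpS'⟩ := hp'
      exact Set.disjoint_left.1 (Aset_disjoint hr (hvalid j S hS).1 (hvalid j' S' hS').1
        (hvalid j S hS).2 (hvalid j' S' hS').2 (by simp [hjj'])) hpS hpS'
    · exact fun j _ => Finset.measurableSet_biUnion _ (fun S _ => measurableSet_Aset s j S)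
  -- null initial segment for the first coordinate
  have h0 : ν {q : ℝ × ℝ | q.1 ≤ 0} = 0 := by
    have hlt : ν {q : ℝ × ℝ | q.1 < 0} = 0 := by
      have h1 : ν {q : ℝ × ℝ | q.1 < 0} = μ {ω | X ⟨0, by omega⟩ ω < 0} := by
        rw [← hlaw ⟨0, by omega⟩, Measure.map_apply (hYmeas _)
          (measurableSet_lt measurable_fst measurable_const)]
        rfl
      rw [h1]
      have h2 := ae_iff.1 (hX_nonneg ⟨0, by omega⟩)
      simp only [not_le] at h2
      exact h2
    refine measure_mono_null ?_ (measure_union_null hlt (hνfst 0))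
    intro q hq
    rcases lt_or_eq_of_le (show q.1 ≤ (0:ℝ) from hq) with h | h
    · exact Or.inl h
    · exact Or.inr h
  -- identify ν-sets with μ-sets
  have hFx : ∀ (i : Fin (m+1)) (x : ℝ), μ {ω | X i ω < x} = ν {q : ℝ × ℝ | q.1 < x} := by
    intro i x
    rw [← hlaw i, Measure.map_apply (hYmeas i)
      (measurableSet_lt measurable_fst measurable_const)]
    rfl
  have hGx : ∀ (i : Fin (m+1)) (x : ℝ), μ {ω | x < X i ω ∧ s < W i ω}
      = ν {q : ℝ × ℝ | x < q.1 ∧ s < q.2} := by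
    intro i x
    have hms : MeasurableSet {q : ℝ × ℝ | x < q.1 ∧ s < q.2} := by
      rw [Set.setOf_and]
      exact (measurableSet_lt measurable_const measurable_fst).inter
        (measurableSet_lt measurable_const measurable_snd)
    rw [← hlaw i, Measure.map_apply (hYmeas i) hms]
    rfl
  -- final computation
  rw [hμev, hπE, hπU, ENNReal.toReal_mul, ENNReal.toReal_mul, ENNReal.toReal_natCast,
    ENNReal.toReal_natCast]
  have hI0 : I0.toReal = ∫ x in Set.Ioi (0:ℝ),
      (ν {q : ℝ × ℝ | q.1 < x}).toReal ^ (r-1) *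
      (ν {q : ℝ × ℝ | x < q.1 ∧ s < q.2}).toReal ^ ((m+1)-r) *
      ∫ y in Set.Ioi s, f x y := by
    rw [hI0def, hνdef, hg]
    exact I0_toReal hf_nonneg hf_meas s (r-1) ((m+1)-r) hprob' (by rw [← hg, ← hνdef]; exact h0)
  rw [hI0]
  have hint : ∫ x in Set.Ioi (0:ℝ),
      (μ {ω | X ⟨0, by omega⟩ ω < x}).toReal ^ (r - 1) *
      (μ {ω | x < X ⟨0, by omega⟩ ω ∧ s < W ⟨0, by omega⟩ ω}).toReal ^ ((m+1) - r) *
      ∫ y in Set.Ioi s, f x y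
      = ∫ x in Set.Ioi (0:ℝ),
      (ν {q : ℝ × ℝ | q.1 < x}).toReal ^ (r-1) *
      (ν {q : ℝ × ℝ | x < q.1 ∧ s < q.2}).toReal ^ ((m+1)-r) *
      ∫ y in Set.Ioi s, f x y := by
    refine integral_congr_ae (Filter.Eventually.of_forall (fun x => ?_))
    simp only [hFx, hGx]
  rw [hint]
  simp only [Nat.add_sub_cancel]
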